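/- Let k be a field, n ≥ 1, and let (X^g)_{g∈G} be a good connected grading of M_n(k) by a group G. Let F_{n−1} be the free group on generators s_1,…,s_{n−1}, and for j > i set w(j,i) = s_{j−1}⋯s_i ∈ F_{n−1}, w(i,j) = w(j,i)^{-1}, and w(i,i) = 1. Then the group homomorphism φ : F_{n−1} → G determined by φ(s_i) = deg E_{i+1,i} is surjective, and for every g ∈ G the homogeneous component X^g equals the k-linear span of the elementary matrices {E_{ji} : φ(w(j,i)) = g}. In other words, every good connected G-grading of M_n(k) is the quotient (pushforward along a surjective group homomorphism) of the canonical good F_{n−1}-grading. -/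

import Mathlib

open Matrix

/-- Cumulative product: `degAux m j = m (j-1) * m (j-2) * ⋯ * m 0`. -/
def degAux {G : Type*} [Group G] (m : ℕ → G) : ℕ → G
  | 0 => 1
  | (j + 1) => m j * degAux m j

/-- The word `w(j,i) = s_{j-1}⋯s_i ∈ F_{n-1}` (with `w(i,j) = w(j,i)⁻¹` and `w(i,i) = 1`),
expressed as `W j * (W i)⁻¹` where `W j = s_{j-1}⋯s_0`. -/
def freeW (n : ℕ) (j i : ℕ) : FreeGroup (Fin (n - 1)) :=
  degAux (fun t => if h : t < n - 1 then FreeGroup.of ⟨t, h⟩ else 1) j *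
    (degAux (fun t => if h : t < n - 1 then FreeGroup.of ⟨t, h⟩ else 1) i)⁻¹

/-- Every good connected `G`-grading of `M_n(k)` is the quotient of the canonical good
`F_{n−1}`-grading: the homomorphism `φ : F_{n−1} → G` with `φ(s_i) = deg E_{i+1,i}` is
surjective, and each homogeneous component `X^g` is the span of the elementary matrices
`E_{ji}` with `φ(w(j,i)) = g`. -/
theorem stmt4 (k : Type*) [Field k] (n : ℕ) (hn : 1 ≤ n) (G : Type*) [Group G]
    (X : G → Submodule k (Matrix (Fin n) (Fin n) k))
    (hind : iSupIndep X) (hsup : (⨆ g, X g) = ⊤)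
    (hmul : ∀ g h, X g * X h ≤ X (g * h))
    (d : Fin n → Fin n → G)
    (hd : ∀ i j : Fin n, Matrix.single j i (1 : k) ∈ X (d j i))
    (hconn : Subgroup.closure {g | X g ≠ ⊥} = ⊤) :
    ∃ φ : FreeGroup (Fin (n - 1)) →* G,
      (∀ t : Fin (n - 1),
        φ (FreeGroup.of t) =
          d ⟨(t : ℕ) + 1, by have := t.isLt; omega⟩ ⟨(t : ℕ), by have := t.isLt; omega⟩) ∧
      Function.Surjective φ ∧
      (∀ g : G, X g = Submodule.span k
        {M | ∃ i j : Fin n, φ (freeW n (j : ℕ) (i : ℕ)) = g ∧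
          M = Matrix.single j i (1 : k)}) := by
  classical
  -- nonzero elementary matrices
  have hne0 : ∀ j i : Fin n, Matrix.single j i (1 : k) ≠ 0 := by
    intro j i h
    have := congrFun (congrFun h j) i
    simp [Matrix.single] at this
  -- uniqueness of degree of a nonzero homogeneous element
  have huniq : ∀ (g h : G) (x : Matrix (Fin n) (Fin n) k),
      x ∈ X g → x ∈ X h → x ≠ 0 → g = h := by
    intro g h x hg hh hx
    by_contra hne
    have hne' : h ≠ g := fun e => hne e.symm
    have hle : X h ≤ ⨆ (j) (_ : j ≠ g), X j := le_iSup₂ (f := fun j _ => X j) h hne'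
    have : x ∈ (⊥ : Submodule k (Matrix (Fin n) (Fin n) k)) :=
      (hind g).le_bot ⟨hg, hle hh⟩
    exact hx (by simpa using this)
  -- cocycle identity
  have hcoc : ∀ j i l : Fin n, d j i * d i l = d j l := by
    intro j i l
    have hmem : Matrix.single j l (1 : k) ∈ X (d j i * d i l) := by
      have := Submodule.mul_mem_mul (hd i j) (hd l i)
      have h2 := hmul (d j i) (d i l) this
      simpa using h2
    exact huniq _ _ _ hmem (hd l j) (hne0 j l)
  have hone : ∀ i : Fin n, d i i = 1 := by
    intro i
    have := hcoc i i i
    exact mul_eq_right.mp this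
  have hinv : ∀ i j : Fin n, (d j i)⁻¹ = d i j := by
    intro i j
    have h1 : d j i * d i j = 1 := by rw [hcoc j i j, hone]
    exact inv_eq_of_mul_eq_one_right h1
  -- the homomorphism
  set f : Fin (n - 1) → G := fun t =>
    d ⟨(t : ℕ) + 1, by have := t.isLt; omega⟩ ⟨(t : ℕ), by have := t.isLt; omega⟩ with hf
  set φ : FreeGroup (Fin (n - 1)) →* G := FreeGroup.lift f with hφ
  have hφof : ∀ t : Fin (n - 1), φ (FreeGroup.of t) = f t := fun t => FreeGroup.lift_apply_of
  set m : ℕ → FreeGroup (Fin (n - 1)) :=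
    fun t => if h : t < n - 1 then FreeGroup.of ⟨t, h⟩ else 1 with hm
  have hzero : (0 : ℕ) < n := hn
  -- degree of cumulative words
  have hdeg : ∀ j : ℕ, ∀ hj : j < n, φ (degAux m j) = d ⟨j, hj⟩ ⟨0, hzero⟩ := by
    intro j
    induction j with
    | zero => intro hj; simp [degAux, hone]
    | succ j ih =>
      intro hj
      have hj' : j < n := by omega
      have hjn : j < n - 1 := by omega
      have : φ (degAux m (j + 1)) = φ (m j) * φ (degAux m j) := by
        simp [degAux, _root_.map_mul]
      rw [this, ih hj']
      have hmj : φ (m j) = d ⟨j + 1, hj⟩ ⟨j, hj'⟩ := by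
        rw [hm]
        simp only [hjn, dif_pos]
        rw [hφof]
      rw [hmj, hcoc]
  have hφw : ∀ i j : Fin n, φ (freeW n (j : ℕ) (i : ℕ)) = d j i := by
    intro i j
    have : φ (freeW n (j : ℕ) (i : ℕ)) =
        φ (degAux m (j : ℕ)) * (φ (degAux m (i : ℕ)))⁻¹ := by
      simp [freeW, _root_.map_mul, hm]
    rw [this, hdeg _ j.isLt, hdeg _ i.isLt, hinv, Fin.eta, Fin.eta, hcoc]
  -- the spans
  set S : G → Submodule k (Matrix (Fin n) (Fin n) k) := fun g =>
    Submodule.span k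
      {M | ∃ i j : Fin n, φ (freeW n (j : ℕ) (i : ℕ)) = g ∧
        M = Matrix.single j i (1 : k)} with hS
  have hSle : ∀ g, S g ≤ X g := by
    intro g
    rw [hS, Submodule.span_le]
    rintro M ⟨i, j, hgij, rfl⟩
    rw [← hgij, hφw]
    exact hd i j
  have hmemS : ∀ i j : Fin n, Matrix.single j i (1 : k) ∈ S (d j i) := by
    intro i j
    exact Submodule.subset_span ⟨i, j, hφw i j, rfl⟩
  have hSsup : (⨆ g, S g) = ⊤ := by
    rw [eq_top_iff]
    intro M _
    rw [matrix_eq_sum_single M]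
    refine Submodule.sum_mem _ fun j _ => Submodule.sum_mem _ fun i _ => ?_
    have : Matrix.single j i (M j i) =
        (M j i) • Matrix.single j i (1 : k) := by simp
    rw [this]
    exact Submodule.smul_mem _ _ (le_iSup S (d j i) (hmemS i j))
  -- componentwise equality
  have hXS : ∀ g, X g = S g := by
    intro g
    refine le_antisymm ?_ (hSle g)
    intro x hx
    have hx' : x ∈ ⨆ g, S g := by rw [hSsup]; trivial
    obtain ⟨c, hc, hcsum⟩ := (Submodule.mem_iSup_iff_exists_finsupp S x).mp hx'
    have hy : ∑ i ∈ c.support.erase g, c i ∈ ⨆ (j) (_ : j ≠ g), X j := by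
      refine Submodule.sum_mem _ fun i hi => ?_
      have hig : i ≠ g := Finset.ne_of_mem_erase hi
      exact le_iSup₂ (f := fun j _ => X j) i hig (hSle i (hc i))
    have hxsum : x = (∑ i ∈ c.support.erase g, c i) + c g := by
      rw [← hcsum]
      by_cases hg : g ∈ c.support
      · exact (Finset.sum_erase_add _ _ hg).symm
      · rw [Finset.erase_eq_of_notMem hg, Finsupp.notMem_support_iff.mp hg, add_zero]
        rfl
    have hdiff : x - c g ∈ X g := Submodule.sub_mem _ hx (hSle g (hc g))
    have hdiff' : x - c g = ∑ i ∈ c.support.erase g, c i := by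
      rw [hxsum, add_sub_cancel_right]
    have : x - c g ∈ (⊥ : Submodule k (Matrix (Fin n) (Fin n) k)) :=
      (hind g).le_bot ⟨hdiff, by rw [hdiff']; exact hy⟩
    have hxg : x = c g := by
      have := Submodule.mem_bot k |>.mp this
      linear_combination (norm := module) this
    rw [hxg]; exact hc g
  -- surjectivity
  have hsurj : Function.Surjective φ := by
    rw [← MonoidHom.range_eq_top]
    rw [eq_top_iff, ← hconn]
    rw [Subgroup.closure_le]
    intro g hg
    by_contra hgr
    apply hg
    rw [hXS, hS]
    convert Submodule.span_empty
    rw [Set.eq_empty_iff_forall_notMem]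
    rintro M ⟨i, j, hgij, rfl⟩
    exact hgr ⟨freeW n (j : ℕ) (i : ℕ), hgij⟩
  exact ⟨φ, fun t => hφof t, hsurj, hXS⟩
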